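/- Let Z be a compact metric space, ℓ : Z → ℝ and Δ : Z → ℝ≥0 continuous, ψ : ℝ≥0 → ℝ≥0 Lipschitz with constant L_ψ and ψ(0)=0 such that 0 ≤ ℓ(z) + ψ(Δ(z)) for all z, and assume the set Z_s = {z : ℓ(z) = 0 ∧ Δ(z) = 0} is nonempty. Fix α > L_ψ. Then there exists a function φ_s : ℝ≥0 → ℝ≥0 with φ_s continuous at 0 and φ_s(0) = 0 such that for all sufficiently small ε > 0 and all z ∈ Z: if ℓ(z) + α·Δ(z) ≤ ε then dist(z, Z_s) ≤ φ_s(ε). -/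

import Mathlib

open Metric Set

theorem stmt_3 {Z : Type*} [MetricSpace Z] [CompactSpace Z]
    (ℓ : Z → ℝ) (Δ : Z → ℝ) (ψ : ℝ → ℝ) (Lψ : ℝ)
    (hℓ : Continuous ℓ) (hΔ : Continuous Δ) (hΔnn : ∀ z, 0 ≤ Δ z)
    (hψnn : ∀ a, 0 ≤ a → 0 ≤ ψ a)
    (hψ0 : ψ 0 = 0)
    (hψLip : ∀ a b, 0 ≤ a → 0 ≤ b → |ψ a - ψ b| ≤ Lψ * |a - b|)
    (hstat : ∀ z, 0 ≤ ℓ z + ψ (Δ z))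
    (hne : ({z : Z | ℓ z = 0 ∧ Δ z = 0}).Nonempty)
    (α : ℝ) (hα : Lψ < α) :
    ∃ φs : ℝ → ℝ, ContinuousAt φs 0 ∧ φs 0 = 0 ∧ (∀ x, 0 ≤ x → 0 ≤ φs x) ∧
      ∃ ε₀ : ℝ, 0 < ε₀ ∧ ∀ ε : ℝ, 0 < ε → ε ≤ ε₀ → ∀ z : Z,
        ℓ z + α * Δ z ≤ ε →
          Metric.infDist z {z : Z | ℓ z = 0 ∧ Δ z = 0} ≤ φs ε := by
  set Zs : Set Z := {z : Z | ℓ z = 0 ∧ Δ z = 0} with hZs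
  set f : Z → ℝ := fun z => ℓ z + α * Δ z with hf
  have hLψnn : 0 ≤ Lψ := by
    have h := hψLip 0 1 le_rfl zero_le_one
    have h0 : (0:ℝ) ≤ |ψ 0 - ψ 1| := abs_nonneg _
    have h1 : |(0:ℝ) - 1| = 1 := by norm_num
    rw [h1, mul_one] at h
    linarith
  -- ψ (Δ z) ≤ Lψ * Δ z
  have hψle : ∀ z, ψ (Δ z) ≤ Lψ * Δ z := by
    intro z
    have h := hψLip (Δ z) 0 (hΔnn z) le_rfl
    rw [hψ0, sub_zero, sub_zero] at h
    calc ψ (Δ z) ≤ |ψ (Δ z)| := le_abs_self _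
      _ ≤ Lψ * |Δ z| := h
      _ = Lψ * Δ z := by rw [abs_of_nonneg (hΔnn z)]
  -- f is nonnegative
  have hfnn : ∀ z, 0 ≤ f z := by
    intro z
    have h1 := hstat z
    have h2 := hψle z
    have h3 := hΔnn z
    simp only [hf]
    nlinarith
  -- f z = 0 → z ∈ Zs
  have hf0 : ∀ z, f z ≤ 0 → z ∈ Zs := by
    intro z hz
    have h1 := hstat z
    have h2 := hψle z
    have h3 := hΔnn z
    have hz' : ℓ z + α * Δ z ≤ 0 := hz
    have hΔle : (α - Lψ) * Δ z ≤ 0 := by nlinarith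
    have hΔ0 : Δ z = 0 := by
      rcases (hΔnn z).eq_or_lt with h | h
      · exact h.symm
      · exfalso; nlinarith [mul_pos (show (0:ℝ) < α - Lψ by linarith) h]
    have hℓ0 : ℓ z = 0 := by
      have := hz
      simp only [hf] at this
      rw [hΔ0] at h1 this
      rw [hψ0] at h1
      linarith
    exact ⟨hℓ0, hΔ0⟩
  have hZsf : ∀ z ∈ Zs, f z = 0 := by
    rintro z ⟨h1, h2⟩
    simp [hf, h1, h2]
  -- boundedness of infDist
  have hcont : Continuous (fun z : Z => infDist z Zs) :=
    (continuous_infDist_pt Zs)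
  have hbdd : ∀ s : Set Z, BddAbove ((fun z => infDist z Zs) '' s) := by
    intro s
    have : BddAbove ((fun z => infDist z Zs) '' (univ : Set Z)) :=
      (isCompact_univ.image hcont).bddAbove
    exact this.mono (image_mono (subset_univ s))
  set φs : ℝ → ℝ := fun ε => sSup ((fun z => infDist z Zs) '' {z | f z ≤ ε}) with hφs
  -- φs ε = 0 for ε < 0
  have hneg : ∀ ε : ℝ, ε < 0 → φs ε = 0 := by
    intro ε hε
    have : {z : Z | f z ≤ ε} = ∅ := by
      ext z; simp only [mem_setOf_eq, mem_empty_iff_false, iff_false, not_le]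
      exact lt_of_lt_of_le hε (hfnn z)
    simp [hφs, this, Real.sSup_empty]
  -- Zs ⊆ {f ≤ ε} for ε ≥ 0
  have hZsmem : ∀ ε : ℝ, 0 ≤ ε → ∀ z ∈ Zs, z ∈ {z : Z | f z ≤ ε} := by
    intro ε hε z hz
    simp only [mem_setOf_eq, hZsf z hz]; exact hε
  have hnn : ∀ ε : ℝ, 0 ≤ ε → 0 ≤ φs ε := by
    intro ε hε
    obtain ⟨z₀, hz₀⟩ := hne
    have hz₀' : infDist z₀ Zs ∈ (fun z => infDist z Zs) '' {z | f z ≤ ε} :=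
      mem_image_of_mem _ (hZsmem ε hε z₀ hz₀)
    exact le_trans (infDist_nonneg) (le_csSup (hbdd _) hz₀')
  have hmono : Monotone φs := by
    intro a b hab
    rcases lt_or_ge a 0 with ha | ha
    · rw [hneg a ha]
      rcases lt_or_ge b 0 with hb | hb
      · rw [hneg b hb]
      · exact hnn b hb
    · obtain ⟨z₀, hz₀⟩ := hne
      refine csSup_le_csSup (hbdd _) ⟨_, mem_image_of_mem _ (hZsmem a ha z₀ hz₀)⟩ ?_
      exact image_mono (fun z hz => le_trans hz hab)
  have hφ0 : φs 0 = 0 := by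
    have him : (fun z => infDist z Zs) '' {z : Z | f z ≤ 0} = {0} := by
      apply Subset.antisymm
      · rintro x ⟨z, hz, rfl⟩
        have hzZs : z ∈ Zs := hf0 z hz
        simp [infDist_zero_of_mem hzZs]
      · rintro x (rfl : x = 0)
        obtain ⟨z₀, hz₀⟩ := hne
        exact ⟨z₀, hZsmem 0 le_rfl z₀ hz₀, infDist_zero_of_mem hz₀⟩
    simp [hφs, him]
  -- key: for every δ > 0 there is η > 0 with φs η < δ
  have hkey : ∀ δ : ℝ, 0 < δ → ∃ η > 0, φs η < δ := by
    intro δ hδ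
    set K : Set Z := {z : Z | δ/2 ≤ infDist z Zs} with hK
    have hKc : IsCompact K :=
      (isClosed_le continuous_const hcont).isCompact
    have hbound : ∀ η : ℝ, (∀ z, f z ≤ η → z ∉ K) → φs η ≤ δ/2 := by
      intro η hη
      apply Real.sSup_le
      · rintro x ⟨z, hz, rfl⟩
        have := hη z hz
        simp only [hK, mem_setOf_eq, not_le] at this
        exact this.le
      · linarith
    rcases K.eq_empty_or_nonempty with hKe | hKne
    · refine ⟨1, one_pos, ?_⟩
      have := hbound 1 (fun z _ => by simp [hKe])
      linarith
    · have hfc : Continuous f := hℓ.add (continuous_const.mul hΔ)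
      obtain ⟨z₀, hz₀K, hz₀min⟩ := hKc.exists_isMinOn hKne hfc.continuousOn
      have hm : 0 < f z₀ := by
        rcases lt_or_eq_of_le (hfnn z₀) with h | h
        · exact h
        · exfalso
          have hz₀Zs : z₀ ∈ Zs := hf0 z₀ (le_of_eq h.symm)
          have : infDist z₀ Zs = 0 := infDist_zero_of_mem hz₀Zs
          have := hz₀K
          simp only [hK, mem_setOf_eq] at this
          linarith
      refine ⟨f z₀ / 2, half_pos hm, ?_⟩
      have hb := hbound (f z₀ / 2) (fun z hz hzK => by
        have h2 : f z₀ ≤ f z := hz₀min hzK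
        exact absurd (le_trans h2 hz) (half_lt_self hm).not_ge)
      exact lt_of_le_of_lt hb (by linarith)
  -- continuity at 0
  have hcont0 : ContinuousAt φs 0 := by
    rw [Metric.continuousAt_iff]
    intro δ hδ
    obtain ⟨η, hη, hφη⟩ := hkey δ hδ
    refine ⟨η, hη, fun ε hε => ?_⟩
    rw [Real.dist_eq, sub_zero] at hε
    rw [Real.dist_eq, hφ0, sub_zero]
    have hεη : ε ≤ η := le_of_lt (lt_of_le_of_lt (le_abs_self ε) hε)
    have h1 : φs ε ≤ φs η := hmono hεη
    rcases lt_or_ge ε 0 with h | h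
    · rw [hneg ε h]; simpa using hδ
    · rw [abs_of_nonneg (hnn ε h)]
      exact lt_of_le_of_lt h1 hφη
  refine ⟨φs, hcont0, hφ0, hnn, 1, one_pos, fun ε hε hε1 z hz => ?_⟩
  exact le_csSup (hbdd _) (mem_image_of_mem _ hz)
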